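/- Let q > 1 and suppose the greedy q-expansion (γ_i) has only finitely many nonzero terms, with γ_m its last nonzero term. Then m is the smallest period of the quasi-greedy q-expansion (α_i), and α_i = γ_i for i = 1, …, m−1, while α_m = γ_m − 1. -/
import Mathlib


/-- `c` is a `q`-expansion: a sequence of nonnegative integers with `c i ≤ q`
(we index from 0, so `c i` stands for the digit `c_{i+1}` of the paper)
such that `∑_{i≥1} c_i q^{-i} = 1`. -/
def IsExpansion (q : ℝ) (c : ℕ → ℕ) : Prop :=
  (∀ i, (c i : ℝ) ≤ q) ∧ ∑' i : ℕ, (c i : ℝ) / q ^ (i + 1) = 1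

/-- The set `𝒰` of univoque numbers: real numbers `q ≥ 1` admitting exactly one
`q`-expansion. -/
def UnivoqueSet : Set ℝ := {q | 1 ≤ q ∧ ∃! c : ℕ → ℕ, IsExpansion q c}

/-- `γ` is the greedy `q`-expansion: for every `n`, `γ n` is the largest
nonnegative integer `k` such that `(∑_{i<n} γ i / q^(i+1)) + k / q^(n+1) ≤ 1`. -/
def IsGreedy (q : ℝ) (γ : ℕ → ℕ) : Prop :=
  ∀ n : ℕ, IsGreatest
    {k : ℕ | (∑ i ∈ Finset.range n, (γ i : ℝ) / q ^ (i + 1)) + (k : ℝ) / q ^ (n + 1) ≤ 1} (γ n)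

/-- `α` is the quasi-greedy `q`-expansion: for every `n`, `α n` is the largest
nonnegative integer `k` such that `(∑_{i<n} α i / q^(i+1)) + k / q^(n+1) < 1`. -/
def IsQuasiGreedy (q : ℝ) (α : ℕ → ℕ) : Prop :=
  ∀ n : ℕ, IsGreatest
    {k : ℕ | (∑ i ∈ Finset.range n, (α i : ℝ) / q ^ (i + 1)) + (k : ℝ) / q ^ (n + 1) < 1} (α n)

/-- Strict lexicographic order on sequences of nonnegative integers. -/
def LexLT (a b : ℕ → ℕ) : Prop := ∃ n : ℕ, (∀ i < n, a i = b i) ∧ a n < b n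

/-- Lexicographic order on sequences of nonnegative integers. -/
def LexLE (a b : ℕ → ℕ) : Prop := LexLT a b ∨ a = b

/-- Strict lexicographic order on finite words of length `n`
(given as functions on the first `n` indices). -/
def WordLT (n : ℕ) (a b : ℕ → ℕ) : Prop := ∃ i < n, (∀ j < i, a j = b j) ∧ a i < b i

/-- If the greedy `q`-expansion is finite with last nonzero digit `γ_m`
(0-indexed: digit at index `m`, so the paper's index is `m+1`), then `m+1`
is the smallest period of the quasi-greedy `q`-expansion `(α_i)`,
`α_i = γ_i` for the first `m` digits and the next digit satisfies
`α_m = γ_m - 1`. -/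
theorem quasiGreedy_of_finite_greedy (q : ℝ) (hq : 1 < q)
    (γ α : ℕ → ℕ) (hγ : IsGreedy q γ) (hα : IsQuasiGreedy q α)
    (m : ℕ) (hm : γ m ≠ 0) (hm' : ∀ n > m, γ n = 0) :
    IsLeast {k : ℕ | 1 ≤ k ∧ ∀ i, α (i + k) = α i} (m + 1) ∧
      (∀ i < m, α i = γ i) ∧ α m = γ m - 1 := by
  have hq0 : (0:ℝ) < q := lt_trans one_pos hq
  have hpow : ∀ n : ℕ, (0:ℝ) < q ^ n := fun n => pow_pos hq0 n
  have hinv : (0:ℝ) ≤ 1/q := by positivity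
  have hinv1 : 1/q < 1 := by rw [div_lt_one hq0]; exact hq
  have htend : Filter.Tendsto (fun n : ℕ => (1/q)^n) Filter.atTop (nhds 0) :=
    tendsto_pow_atTop_nhds_zero_of_lt_one hinv hinv1
  have hinvpow : ∀ n : ℕ, (1/q)^n = 1/q^n := fun n => by rw [div_pow, one_pow]
  set S : ℕ → ℝ := fun n => ∑ i ∈ Finset.range n, (γ i : ℝ)/q^(i+1) with hSdef
  set T : ℕ → ℝ := fun n => ∑ i ∈ Finset.range n, (α i : ℝ)/q^(i+1) with hTdef
  have Ssucc : ∀ n, S (n+1) = S n + (γ n : ℝ)/q^(n+1) := fun n => Finset.sum_range_succ _ _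
  have Tsucc : ∀ n, T (n+1) = T n + (α n : ℝ)/q^(n+1) := fun n => Finset.sum_range_succ _ _
  have S0 : S 0 = 0 := Finset.sum_range_zero _
  have T0 : T 0 = 0 := Finset.sum_range_zero _
  -- basic greedy facts
  have hγ1 : ∀ n, S (n+1) ≤ 1 := fun n => by rw [Ssucc]; exact (hγ n).1
  have hγ2 : ∀ n, 1 < S n + ((γ n : ℝ)+1)/q^(n+1) := by
    intro n
    by_contra h
    push_neg at h
    have hmem : (γ n + 1) ∈ {k : ℕ |
        (∑ i ∈ Finset.range n, (γ i : ℝ) / q ^ (i + 1)) + (k : ℝ) / q ^ (n + 1) ≤ 1} := by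
      simpa [Set.mem_setOf_eq] using h
    have := (hγ n).2 hmem
    omega
  -- basic quasi-greedy facts
  have hα1 : ∀ n, T (n+1) < 1 := fun n => by rw [Tsucc]; exact (hα n).1
  have hα2 : ∀ n, 1 ≤ T n + ((α n : ℝ)+1)/q^(n+1) := by
    intro n
    by_contra h
    push_neg at h
    have hmem : (α n + 1) ∈ {k : ℕ |
        (∑ i ∈ Finset.range n, (α i : ℝ) / q ^ (i + 1)) + (k : ℝ) / q ^ (n + 1) < 1} := by
      simpa [Set.mem_setOf_eq] using h
    have := (hα n).2 hmem
    omega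
  have Tle : ∀ n, T n ≤ 1 := by
    intro n
    cases n with
    | zero => rw [T0]; norm_num
    | succ n => exact le_of_lt (hα1 n)
  have Ttail : ∀ n, 1 - T n ≤ (1/q)^n := by
    intro n
    cases n with
    | zero => rw [T0]; norm_num
    | succ n =>
      have h := hα2 n
      have : ((α n : ℝ)+1)/q^(n+1) = (α n : ℝ)/q^(n+1) + 1/q^(n+1) := by ring
      rw [this] at h
      rw [hinvpow, Tsucc]
      linarith
  -- S is eventually constant and S (m+1) = 1
  have Smono : ∀ i j, i ≤ j → S i ≤ S j := by
    intro i j hij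
    apply Finset.sum_le_sum_of_subset_of_nonneg (Finset.range_subset_range.mpr hij)
    intro k _ _
    positivity
  have Sconst : ∀ n, m+1 ≤ n → S n = S (m+1) := by
    intro n hn
    induction n with
    | zero => omega
    | succ n ih =>
      rcases Nat.lt_or_ge n (m+1) with h | h
      · have : n + 1 = m + 1 := by omega
        rw [this]
      · rw [Ssucc, hm' n (by omega), ih (by omega)]
        norm_num
  have Skey : S (m+1) = 1 := by
    refine le_antisymm (hγ1 m) ?_
    have hb : ∀ᶠ n : ℕ in Filter.atTop, 1 - S (m+1) ≤ (1/q)^n := by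
      rw [Filter.eventually_atTop]
      refine ⟨m+1, fun n hn => ?_⟩
      have h2 := hγ2 n
      rw [hm' n (by omega), Sconst n hn] at h2
      push_cast at h2
      have h3 : 1/q^(n+1) ≤ (1/q)^n := by
        rw [hinvpow]
        apply div_le_div_of_nonneg_left one_pos.le (hpow n)
        calc q^n = q^n * 1 := by ring
        _ ≤ q^n * q := by nlinarith [hpow n]
        _ = q^(n+1) := by ring
      norm_num at h2
      rw [one_div] at h3
      linarith
    have := ge_of_tendsto htend hb
    linarith
  have Sm1 : S m + (γ m : ℝ)/q^(m+1) = 1 := by rw [← Ssucc]; exact Skey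
  have hγm1 : 1 ≤ γ m := Nat.one_le_iff_ne_zero.mpr hm
  have Slt : ∀ j, j ≤ m → S j < 1 := by
    intro j hj
    have h1 : S j ≤ S m := Smono j m hj
    have h2 : (0:ℝ) < (γ m : ℝ)/q^(m+1) := by
      have : (1:ℝ) ≤ (γ m : ℝ) := by exact_mod_cast hγm1
      positivity
    linarith
  -- α agrees with γ up to index m
  have agree : ∀ n, n ≤ m → T n = S n ∧ ∀ i < n, α i = γ i := by
    intro n
    induction n with
    | zero => intro _; exact ⟨by rw [T0, S0], fun i hi => absurd hi (Nat.not_lt_zero i)⟩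
    | succ n ih =>
      intro h
      obtain ⟨hTS, hiq⟩ := ih (by omega)
      have hset : S (n+1) < 1 := lt_of_le_of_lt (Smono (n+1) m h) (Slt m le_rfl)
      have hmem1 : γ n ∈ {k : ℕ |
          (∑ i ∈ Finset.range n, (α i : ℝ) / q ^ (i + 1)) + (k : ℝ) / q ^ (n + 1) < 1} := by
        show T n + (γ n : ℝ)/q^(n+1) < 1
        rw [hTS, ← Ssucc]; exact hset
      have h1 : γ n ≤ α n := (hα n).2 hmem1
      have hmem2 : α n ∈ {k : ℕ |
          (∑ i ∈ Finset.range n, (γ i : ℝ) / q ^ (i + 1)) + (k : ℝ) / q ^ (n + 1) ≤ 1} := by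
        show S n + (α n : ℝ)/q^(n+1) ≤ 1
        rw [← hTS]
        have := (hα n).1
        exact le_of_lt this
      have h2 : α n ≤ γ n := (hγ n).2 hmem2
      have heq : α n = γ n := le_antisymm h2 h1
      refine ⟨by rw [Tsucc, Ssucc, hTS, heq], fun i hi => ?_⟩
      rcases Nat.lt_or_ge i n with h' | h'
      · exact hiq i h'
      · have : i = n := by omega
        rw [this]; exact heq
  have part2 : ∀ i < m, α i = γ i := (agree m le_rfl).2
  have Tm : T m = S m := (agree m le_rfl).1
  -- α m = γ m - 1
  have castsub : ((γ m - 1 : ℕ) : ℝ) = (γ m : ℝ) - 1 := by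
    push_cast [Nat.cast_sub hγm1]; ring
  have part3 : α m = γ m - 1 := by
    have hmem : (γ m - 1) ∈ {k : ℕ |
        (∑ i ∈ Finset.range m, (α i : ℝ) / q ^ (i + 1)) + (k : ℝ) / q ^ (m + 1) < 1} := by
      show T m + ((γ m - 1 : ℕ) : ℝ)/q^(m+1) < 1
      rw [Tm, castsub]
      have hd : ((γ m : ℝ) - 1)/q^(m+1) = (γ m : ℝ)/q^(m+1) - 1/q^(m+1) := by ring
      rw [hd]
      have : (0:ℝ) < 1/q^(m+1) := by positivity
      linarith
    have h1 : γ m - 1 ≤ α m := (hα m).2 hmem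
    have h2 : α m ≤ γ m - 1 := by
      have hx := (hα m).1
      have hx' : T m + (α m : ℝ)/q^(m+1) < 1 := hx
      rw [Tm] at hx'
      have : (α m : ℝ)/q^(m+1) < (γ m : ℝ)/q^(m+1) := by linarith
      have hlt : (α m : ℝ) < (γ m : ℝ) := by
        have := (div_lt_div_iff_of_pos_right (hpow (m+1))).mp this
        exact this
      have : α m < γ m := by exact_mod_cast hlt
      omega
    omega
  have castam : ((α m : ℕ) : ℝ) = (γ m : ℝ) - 1 := by rw [part3, castsub]
  have Tm1 : T (m+1) = 1 - 1/q^(m+1) := by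
    rw [Tsucc, Tm, castam]
    have : ((γ m : ℝ) - 1)/q^(m+1) = (γ m : ℝ)/q^(m+1) - 1/q^(m+1) := by ring
    rw [this]
    linarith
  -- periodicity with period m+1
  have hpowsplit : ∀ n : ℕ, q^(n+(m+1)+1) = q^(n+1) * q^(m+1) := by
    intro n; rw [← pow_add]; ring_nf
  have setiff : ∀ n : ℕ, T (n+(m+1)) = 1 - (1 - T n)/q^(m+1) →
      ∀ k : ℕ, (T (n+(m+1)) + (k:ℝ)/q^(n+(m+1)+1) < 1 ↔ T n + (k:ℝ)/q^(n+1) < 1) := by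
    intro n hTn k
    rw [hTn, hpowsplit n]
    rw [show (k:ℝ)/(q^(n+1) * q^(m+1)) = ((k:ℝ)/q^(n+1))/q^(m+1) from by rw [div_div]]
    constructor
    · intro h
      have h' : ((k:ℝ)/q^(n+1))/q^(m+1) < (1 - T n)/q^(m+1) := by linarith
      have := (div_lt_div_iff_of_pos_right (hpow (m+1))).mp h'
      linarith
    · intro h
      have h' : (k:ℝ)/q^(n+1) < 1 - T n := by linarith
      have := (div_lt_div_iff_of_pos_right (hpow (m+1))).mpr h'
      linarith
  have alphaeq : ∀ n : ℕ, T (n+(m+1)) = 1 - (1 - T n)/q^(m+1) → α (n+(m+1)) = α n := by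
    intro n hTn
    have hiff := setiff n hTn
    have hg1 : IsGreatest {k : ℕ | T n + (k:ℝ)/q^(n+1) < 1} (α (n+(m+1))) := by
      obtain ⟨h1, h2⟩ := hα (n+(m+1))
      constructor
      · exact (hiff _).mp h1
      · intro k hk
        exact h2 ((hiff k).mpr hk)
    exact hg1.unique (hα n)
  have Tper : ∀ n : ℕ, T (n+(m+1)) = 1 - (1 - T n)/q^(m+1) := by
    intro n
    induction n with
    | zero =>
      show T (0 + (m+1)) = _
      rw [Nat.zero_add, Tm1, T0]
      norm_num
    | succ n ih =>
      have hae := alphaeq n ih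
      have : (n+1) + (m+1) = (n + (m+1)) + 1 := by omega
      rw [this, Tsucc, ih, hae, Tsucc, hpowsplit n]
      rw [show ((α n : ℝ))/(q^(n+1) * q^(m+1)) = ((α n : ℝ)/q^(n+1))/q^(m+1) from by rw [div_div]]
      field_simp
      ring
  have period : ∀ i, α (i + (m+1)) = α i := fun n => alphaeq n (Tper n)
  -- minimality of the period
  refine ⟨⟨⟨by omega, period⟩, ?_⟩, part2, part3⟩
  rintro k ⟨hk1, hkper⟩
  by_contra hcon
  push_neg at hcon
  have hkm : k ≤ m := by omega
  have block : ∀ n, T (n + k) = T k + T n * (1/q)^k := by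
    intro n
    have h1 : T (n + k) = T (k + n) := by rw [Nat.add_comm]
    rw [h1]
    show (∑ i ∈ Finset.range (k + n), (α i : ℝ)/q^(i+1)) = _
    rw [Finset.sum_range_add]
    congr 1
    rw [hTdef, Finset.sum_mul]
    apply Finset.sum_congr rfl
    intro i _
    rw [show k + i = i + k from by omega, hkper i]
    rw [hinvpow, div_mul_div_comm, mul_one, ← pow_add]
    congr 2
    omega
  have Tk : T k = 1 - (1/q)^k := by
    have hb : ∀ n : ℕ, |T k - (1 - (1/q)^k)| ≤ 2 * (1/q)^n := by
      intro n
      have hid : T k - (1 - (1/q)^k) = (T (n+k) - 1) - (T n - 1) * (1/q)^k := by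
        rw [block n]; ring
      have h1 : 0 ≤ 1 - T (n+k) := by linarith [Tle (n+k)]
      have h2 : 1 - T (n+k) ≤ (1/q)^(n+k) := Ttail (n+k)
      have h3 : 0 ≤ 1 - T n := by linarith [Tle n]
      have h4 : 1 - T n ≤ (1/q)^n := Ttail n
      have h5 : (1/q)^(n+k) ≤ (1/q)^n := pow_le_pow_of_le_one hinv (le_of_lt hinv1) (by omega)
      have h6 : (0:ℝ) ≤ (1/q)^k := by positivity
      have h7 : (1/q)^k ≤ 1 := pow_le_one₀ hinv (le_of_lt hinv1)
      have h8 : (1 - T n) * (1/q)^k ≤ (1/q)^n := by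
        calc (1 - T n) * (1/q)^k ≤ (1/q)^n * (1/q)^k := by
              apply mul_le_mul_of_nonneg_right h4 h6
        _ ≤ (1/q)^n * 1 := by
              apply mul_le_mul_of_nonneg_left h7 (by positivity)
        _ = (1/q)^n := by ring
      have h9 : 0 ≤ (1 - T n) * (1/q)^k := mul_nonneg h3 h6
      rw [hid, abs_le]
      constructor <;> nlinarith
    have h0 : |T k - (1 - (1/q)^k)| ≤ 0 := by
      have htend2 : Filter.Tendsto (fun n : ℕ => 2 * (1/q)^n) Filter.atTop (nhds 0) := by
        have := htend.const_mul (2:ℝ)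
        simpa using this
      exact ge_of_tendsto' htend2 hb
    have := abs_nonneg (T k - (1 - (1/q)^k))
    have : |T k - (1 - (1/q)^k)| = 0 := le_antisymm h0 this
    have := abs_eq_zero.mp this
    linarith [sub_eq_zero.mp this]
  have hTSk : T k = S k := by
    rw [hTdef, hSdef]
    apply Finset.sum_congr rfl
    intro i hi
    rw [part2 i (by simp at hi; omega)]
  obtain ⟨j, rfl⟩ : ∃ j, k = j + 1 := ⟨k - 1, by omega⟩
  have hfin : S j + ((γ j : ℝ)+1)/q^(j+1) = 1 := by
    have h1 : S (j+1) = 1 - (1/q)^(j+1) := by rw [← hTSk, Tk]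
    rw [Ssucc] at h1
    have h2 : ((γ j : ℝ)+1)/q^(j+1) = (γ j : ℝ)/q^(j+1) + 1/q^(j+1) := by ring
    rw [h2, hinvpow] at *
    linarith
  have := hγ2 j
  linarith
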